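/- For a block B = D[i_p..j_p, i_t..j_t] of the DTW table with width w = j_t − i_t and letter distance d = d(P[i_p],T[i_t]), the values in the rightmost column of B satisfy: for every i_p < x ≤ j_p, D[x,j_t] = D[i_p, j_t−(x−i_p)] + (x−i_p)·d if x−i_p ≤ w, and D[x,j_t] = D[x−w, i_t] + w·d otherwise. -/

import Mathlib

open scoped ENNReal

private lemma dtw_row_mono {α : Type*} (d : α → α → ℝ≥0∞) (P T : ℕ → α)
    (D : ℕ → ℕ → ℝ≥0∞) (hD0 : ∀ j, D 0 j = 0)
    (hrec : ∀ i j, 1 ≤ i → 1 ≤ j →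
      D i j = min (min (D (i - 1) (j - 1)) (D (i - 1) j)) (D i (j - 1))
        + d (P i) (T j))
    (v : ℕ) (hv : 2 ≤ v) (hTv : T (v - 1) = T v) :
    ∀ u, D u (v - 1) ≤ D u v := by
  intro u
  induction u with
  | zero => rw [hD0, hD0]
  | succ u ih =>
    have h1 : D (u + 1) (v - 1) ≤ D u (v - 1) + d (P (u + 1)) (T v) := by
      rw [hrec (u + 1) (v - 1) (by omega) (by omega), ← hTv]
      gcongr
      simp only [Nat.add_sub_cancel]
      exact le_trans (min_le_left _ _) (min_le_right _ _)
    rw [hrec (u + 1) v (by omega) (by omega)]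
    simp only [Nat.add_sub_cancel, ← min_add_add_right]
    exact le_min (le_min h1 (le_trans h1 (add_le_add ih le_rfl))) le_self_add

private lemma dtw_col_mono {α : Type*} (d : α → α → ℝ≥0∞) (P T : ℕ → α)
    (D : ℕ → ℕ → ℝ≥0∞) (hDi0 : ∀ i, 1 ≤ i → D i 0 = ⊤)
    (hrec : ∀ i j, 1 ≤ i → 1 ≤ j →
      D i j = min (min (D (i - 1) (j - 1)) (D (i - 1) j)) (D i (j - 1))
        + d (P i) (T j))
    (u : ℕ) (hu : 2 ≤ u) (hPu : P (u - 1) = P u) :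
    ∀ v, D (u - 1) v ≤ D u v := by
  intro v
  induction v with
  | zero => rw [hDi0 (u - 1) (by omega), hDi0 u (by omega)]
  | succ v ih =>
    have h1 : D (u - 1) (v + 1) ≤ D (u - 1) v + d (P u) (T (v + 1)) := by
      rw [hrec (u - 1) (v + 1) (by omega) (by omega), ← hPu]
      gcongr
      simp only [Nat.add_sub_cancel]
      exact min_le_right _ _
    rw [hrec u (v + 1) (by omega) (by omega)]
    simp only [Nat.add_sub_cancel, ← min_add_add_right]
    exact le_min (le_min h1 le_self_add) (le_trans h1 (add_le_add ih le_rfl))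

/-- rightmost-column values of a block of the DTW table. With
`w = j_t − i_t` and `c = d(P[i_p],T[i_t])`, for every `i_p < x ≤ j_p`:
`D[x,j_t] = D[i_p, j_t−(x−i_p)] + (x−i_p)·c` if `x−i_p ≤ w`, and
`D[x,j_t] = D[x−w, i_t] + w·c` otherwise. -/
theorem block_right_column {α : Type*} (d : α → α → ℝ≥0∞) (P T : ℕ → α)
    (hrefl : ∀ a, d a a = 0) (hpos : ∀ a b, a ≠ b → 0 < d a b)
    (D : ℕ → ℕ → ℝ≥0∞)
    (hD0 : ∀ j, D 0 j = 0) (hDi0 : ∀ i, 1 ≤ i → D i 0 = ⊤)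
    (hrec : ∀ i j, 1 ≤ i → 1 ≤ j →
      D i j = min (min (D (i - 1) (j - 1)) (D (i - 1) j)) (D i (j - 1))
        + d (P i) (T j))
    (ip jp it jt : ℕ) (hip : 1 ≤ ip) (hpj : ip ≤ jp) (hit : 1 ≤ it) (htj : it ≤ jt)
    (hP : ∀ x, ip ≤ x → x ≤ jp → P x = P ip)
    (hT : ∀ y, it ≤ y → y ≤ jt → T y = T it)
    (x : ℕ) (hx1 : ip < x) (hx2 : x ≤ jp) :
    (x - ip ≤ jt - it →
      D x jt = D ip (jt - (x - ip)) + ((x - ip : ℕ) : ℝ≥0∞) * d (P ip) (T it)) ∧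
    (jt - it < x - ip →
      D x jt = D (x - (jt - it)) it + ((jt - it : ℕ) : ℝ≥0∞) * d (P ip) (T it)) := by
  -- the diagonal lemma: strictly inside the block, the min is attained on the diagonal
  have diag : ∀ u v, ip < u → u ≤ jp → it < v → v ≤ jt →
      D u v = D (u - 1) (v - 1) + d (P ip) (T it) := by
    intro u v hu1 hu2 hv1 hv2
    have hrow : D (u - 1) (v - 1) ≤ D (u - 1) v :=
      dtw_row_mono d P T D hD0 hrec v (by omega)
        (by rw [hT (v - 1) (by omega) (by omega), hT v (by omega) hv2]) (u - 1)
    have hcol : D (u - 1) (v - 1) ≤ D u (v - 1) :=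
      dtw_col_mono d P T D hDi0 hrec u (by omega)
        (by rw [hP (u - 1) (by omega) (by omega), hP u (by omega) hu2]) (v - 1)
    rw [hrec u v (by omega) (by omega), hP u (by omega) hu2, hT v (by omega) hv2,
      min_eq_left hrow, min_eq_left hcol]
  -- iterate the diagonal lemma
  have key : ∀ m, m ≤ x - ip → m ≤ jt - it →
      D x jt = D (x - m) (jt - m) + (m : ℝ≥0∞) * d (P ip) (T it) := by
    intro m
    induction m with
    | zero => simp
    | succ m ih =>
      intro h1 h2
      rw [ih (by omega) (by omega), diag (x - m) (jt - m) (by omega) (by omega)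
        (by omega) (by omega), show x - m - 1 = x - (m + 1) by omega,
        show jt - m - 1 = jt - (m + 1) by omega]
      push_cast
      ring
  constructor
  · intro h
    rw [key (x - ip) le_rfl h, show x - (x - ip) = ip by omega]
  · intro h
    rw [key (jt - it) (by omega) le_rfl, show jt - (jt - it) = it by omega]
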